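/- Convex combination formula for the determining form: let X be a real Banach space, a ∈ X, S ∈ (0, ∞], and q : X → ℝ a continuous function. If v : [0, S) → X is differentiable and satisfies v'(s) = −q(v(s))²·(v(s) − a) for all s ∈ [0, S), then v(s) = β(s)·v(0) + (1 − β(s))·a for all s ∈ [0, S), where β(s) = exp(−∫_0^s q(v(τ))² dτ). In particular every value v(s) lies on the line segment between v(0) and a, and β(s) ∈ (0, 1] is nonincreasing in s. -/

import Mathlib

open MeasureTheory Set intervalIntegral

/-- Convex combination formula for the determining form. -/
theorem detform_convex_combination
    {X : Type*} [NormedAddCommGroup X] [NormedSpace ℝ X] [CompleteSpace X]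
    (a : X) (S : EReal) (hS : 0 < S) (q : X → ℝ) (hq : Continuous q)
    (v : ℝ → X)
    (hv : ∀ s : ℝ, 0 ≤ s → (s : EReal) < S →
      HasDerivAt v ((-(q (v s) ^ 2)) • (v s - a)) s) :
    (∀ s : ℝ, 0 ≤ s → (s : EReal) < S →
      v s = Real.exp (-(∫ τ in (0:ℝ)..s, q (v τ) ^ 2)) • v 0
          + (1 - Real.exp (-(∫ τ in (0:ℝ)..s, q (v τ) ^ 2))) • a
        ∧ Real.exp (-(∫ τ in (0:ℝ)..s, q (v τ) ^ 2)) ∈ Set.Ioc (0:ℝ) 1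
        ∧ v s ∈ segment ℝ (v 0) a)
    ∧ (∀ s1 s2 : ℝ, 0 ≤ s1 → s1 ≤ s2 → (s2 : EReal) < S →
        Real.exp (-(∫ τ in (0:ℝ)..s2, q (v τ) ^ 2))
          ≤ Real.exp (-(∫ τ in (0:ℝ)..s1, q (v τ) ^ 2))) := by
  set f : ℝ → ℝ := fun τ => q (v τ) ^ 2 with hfdef
  set I : ℝ → ℝ := fun t => ∫ τ in (0:ℝ)..t, f τ with hIdef
  -- continuity of f at points of [0, S)
  have hfc : ∀ s : ℝ, 0 ≤ s → (s : EReal) < S → ContinuousAt f s := by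
    intro s hs hsS
    exact (hq.continuousAt.comp (hv s hs hsS).continuousAt).pow 2
  -- interval integrability
  have hfint : ∀ s : ℝ, 0 ≤ s → (s : EReal) < S → IntervalIntegrable f volume 0 s := by
    intro s hs hsS
    apply ContinuousOn.intervalIntegrable
    intro τ hτ
    rw [Set.uIcc_of_le hs] at hτ
    exact (hfc τ hτ.1 (lt_of_le_of_lt (EReal.coe_le_coe_iff.mpr hτ.2) hsS)).continuousWithinAt
  -- nonnegativity of the integral
  have hInonneg : ∀ s : ℝ, 0 ≤ s → 0 ≤ I s := by
    intro s hs
    exact intervalIntegral.integral_nonneg hs (fun u _ => sq_nonneg _)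
  -- main identity via a constant auxiliary function
  have key : ∀ s : ℝ, 0 ≤ s → (s : EReal) < S →
      Real.exp (I s) • (v s - a) = v 0 - a := by
    intro s hs hsS
    set w : ℝ → X := fun t => Real.exp (I t) • (v t - a) with hwdef
    have hcontw : ContinuousOn w (Icc 0 s) := by
      have hIcont : ContinuousOn I (Icc 0 s) := by
        have hfco : ContinuousOn f (Set.uIcc (0:ℝ) s) := by
          intro τ hτ
          rw [Set.uIcc_of_le hs] at hτ
          exact (hfc τ hτ.1 (lt_of_le_of_lt (EReal.coe_le_coe_iff.mpr hτ.2) hsS)).continuousWithinAt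
        have := intervalIntegral.continuousOn_primitive_interval
          (μ := volume) (f := f) (a := (0:ℝ)) (b := s) hfco.integrableOn_uIcc
        rwa [Set.uIcc_of_le hs] at this
      have hvcont : ContinuousOn v (Icc 0 s) := fun t ht =>
        ((hv t ht.1 (lt_of_le_of_lt (EReal.coe_le_coe_iff.mpr ht.2) hsS)).continuousAt).continuousWithinAt
      exact (hIcont.rexp).smul (hvcont.sub continuousOn_const)
    have hderivw : ∀ x ∈ Ico 0 s, HasDerivWithinAt w 0 (Ici x) x := by
      intro x hx
      have hxS : (x : EReal) < S := lt_of_le_of_lt (EReal.coe_le_coe_iff.mpr hx.2.le) hsS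
      have hmeas : StronglyMeasurableAtFilter f (nhdsWithin x (Ioi x)) := by
        refine ⟨Icc x s, Icc_mem_nhdsGT_of_mem ⟨le_refl x, hx.2⟩, ?_⟩
        refine ContinuousOn.aestronglyMeasurable ?_ measurableSet_Icc
        intro τ hτ
        exact (hfc τ (hx.1.trans hτ.1)
          (lt_of_le_of_lt (EReal.coe_le_coe_iff.mpr hτ.2) hsS)).continuousWithinAt
      have hfx : IntervalIntegrable f volume 0 x := hfint x hx.1 hxS
      have hI' : HasDerivWithinAt I (f x) (Ici x) x :=
        intervalIntegral.integral_hasDerivWithinAt_right (s := Ici x) (t := Ioi x) hfx hmeas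
          ((hfc x hx.1 hxS).continuousWithinAt)
      have hβ : HasDerivWithinAt (fun t => Real.exp (I t)) (Real.exp (I x) * f x) (Ici x) x :=
        hI'.exp
      have hvx : HasDerivWithinAt (fun t => v t - a) ((-(f x)) • (v x - a)) (Ici x) x :=
        ((hv x hx.1 hxS).hasDerivWithinAt).sub_const a
      have := hβ.smul hvx
      have heq : Real.exp (I x) • ((-(f x)) • (v x - a))
          + (Real.exp (I x) * f x) • (v x - a) = 0 := by
        rw [smul_smul, ← add_smul]
        have : Real.exp (I x) * -f x + Real.exp (I x) * f x = 0 := by ring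
        rw [this, zero_smul]
      rw [heq] at this
      exact this
    have hconst := constant_of_has_deriv_right_zero hcontw hderivw s ⟨hs, le_refl s⟩
    have hI0 : I 0 = 0 := by simp [hIdef]
    simpa [hwdef, hI0] using hconst
  constructor
  · intro s hs hsS
    have hk := key s hs hsS
    have hEpos : (0:ℝ) < Real.exp (I s) := Real.exp_pos _
    have hvs : v s - a = Real.exp (-(I s)) • (v 0 - a) := by
      rw [← hk, Real.exp_neg, smul_smul, inv_mul_cancel₀ (ne_of_gt hEpos), one_smul]
    have hform : v s = Real.exp (-(I s)) • v 0 + (1 - Real.exp (-(I s))) • a := by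
      have h1 : v s = Real.exp (-(I s)) • (v 0 - a) + a := by
        rw [← hvs]; abel
      rw [h1, smul_sub, sub_smul, one_smul]; abel
    have hIoc : Real.exp (-(I s)) ∈ Set.Ioc (0:ℝ) 1 := by
      constructor
      · exact Real.exp_pos _
      · rw [Real.exp_le_one_iff, neg_nonpos]
        exact hInonneg s hs
    refine ⟨hform, hIoc, ?_⟩
    exact ⟨Real.exp (-(I s)), 1 - Real.exp (-(I s)), le_of_lt hIoc.1,
      by linarith [hIoc.2], by ring, hform.symm⟩
  · intro s1 s2 hs1 h12 hs2S
    have hs2 : 0 ≤ s2 := hs1.trans h12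
    have hs1S : (s1 : EReal) < S := lt_of_le_of_lt (EReal.coe_le_coe_iff.mpr h12) hs2S
    have hint2 : IntervalIntegrable f volume 0 s2 := hfint s2 hs2 hs2S
    have hint1 : IntervalIntegrable f volume 0 s1 := hfint s1 hs1 hs1S
    have hint12 : IntervalIntegrable f volume s1 s2 := by
      apply hint2.mono_set
      rw [Set.uIcc_of_le h12, Set.uIcc_of_le hs2]
      exact Set.Icc_subset_Icc hs1 (le_refl _)
    have hadd : I s1 + (∫ τ in s1..s2, f τ) = I s2 :=
      intervalIntegral.integral_add_adjacent_intervals hint1 hint12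
    have hpos : 0 ≤ ∫ τ in s1..s2, f τ :=
      intervalIntegral.integral_nonneg h12 (fun u _ => sq_nonneg _)
    have : I s1 ≤ I s2 := by linarith
    exact Real.exp_le_exp.mpr (neg_le_neg this)
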